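/- Fix n ≥ 1 and λ_L, λ_G, γ, π̄ > 0. For m ∈ [0,π̄], let μ_m be the unique probability distribution on {0,…,n} satisfying γ(ℓ+1)μ_m(ℓ+1) = (1 − ℓ/n)(λ_L ℓ + λ_G(n/π̄)m)·μ_m(ℓ) for 0 ≤ ℓ ≤ n−1. Then the mean M(m) = Σ_{ℓ=0}^n ℓ·μ_m(ℓ) is a continuous and non-decreasing function of m on [0,π̄], with M(0) = 0 and M(m) ≤ n. -/

import Mathlib

open Finset Set

/-- The unnormalized stationary weight for the forced SIS chain. -/
noncomputable def sisF (n : ℕ) (lamL a gam : ℝ) (ℓ : ℕ) (m : ℝ) : ℝ :=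
  ∏ j ∈ Finset.range ℓ, ((1 - (j : ℝ) / n) * (lamL * j + a * m) / (gam * (j + 1)))

lemma sisF_succ (n : ℕ) (lamL a gam : ℝ) (ℓ : ℕ) (m : ℝ) :
    sisF n lamL a gam (ℓ + 1) m =
      sisF n lamL a gam ℓ m * ((1 - (ℓ : ℝ) / n) * (lamL * ℓ + a * m) / (gam * (ℓ + 1))) :=
  Finset.prod_range_succ _ _

lemma sisF_nonneg (n : ℕ) (lamL a gam : ℝ) (hL : 0 ≤ lamL) (ha : 0 ≤ a) (hg : 0 < gam)
    {ℓ : ℕ} (hℓ : ℓ ≤ n) {m : ℝ} (hm : 0 ≤ m) : 0 ≤ sisF n lamL a gam ℓ m := by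
  apply Finset.prod_nonneg
  intro j hj
  have hjn : (j : ℝ) / n ≤ 1 :=
    div_le_one_of_le₀ (by exact_mod_cast le_trans (le_of_lt (Finset.mem_range.mp hj)) hℓ)
      (Nat.cast_nonneg n)
  apply div_nonneg
  · apply mul_nonneg (by linarith)
    positivity
  · positivity

lemma sisF_supermod (n : ℕ) (lamL a gam : ℝ) (hL : 0 ≤ lamL) (ha : 0 ≤ a) (hg : 0 < gam)
    {k ℓ : ℕ} (hkl : k ≤ ℓ) (hℓ : ℓ ≤ n) {m1 m2 : ℝ} (h1 : 0 ≤ m1) (h12 : m1 ≤ m2) :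
    sisF n lamL a gam ℓ m1 * sisF n lamL a gam k m2 ≤
      sisF n lamL a gam ℓ m2 * sisF n lamL a gam k m1 := by
  have h2 : 0 ≤ m2 := le_trans h1 h12
  have split : ∀ m : ℝ, sisF n lamL a gam ℓ m =
      sisF n lamL a gam k m *
        ∏ j ∈ Finset.Ico k ℓ, ((1 - (j : ℝ) / n) * (lamL * j + a * m) / (gam * (j + 1))) := by
    intro m
    rw [sisF, sisF, Finset.range_eq_Ico, Finset.range_eq_Ico]
    exact (Finset.prod_Ico_consecutive _ (Nat.zero_le k) hkl).symm
  have hfacnn : ∀ (m : ℝ), 0 ≤ m → ∀ j ∈ Finset.Ico k ℓ,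
      0 ≤ (1 - (j : ℝ) / n) * (lamL * j + a * m) / (gam * (j + 1)) := by
    intro m hm j hj
    have hjℓ : j < ℓ := (Finset.mem_Ico.mp hj).2
    have hjn : (j : ℝ) / n ≤ 1 :=
      div_le_one_of_le₀ (by exact_mod_cast le_trans (le_of_lt hjℓ) hℓ) (Nat.cast_nonneg n)
    apply div_nonneg
    · apply mul_nonneg (by linarith); positivity
    · positivity
  have hG : (∏ j ∈ Finset.Ico k ℓ, ((1 - (j : ℝ) / n) * (lamL * j + a * m1) / (gam * (j + 1)))) ≤
      ∏ j ∈ Finset.Ico k ℓ, ((1 - (j : ℝ) / n) * (lamL * j + a * m2) / (gam * (j + 1))) := by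
    apply Finset.prod_le_prod (hfacnn m1 h1)
    intro j hj
    have hjℓ : j < ℓ := (Finset.mem_Ico.mp hj).2
    have hjn : (j : ℝ) / n ≤ 1 :=
      div_le_one_of_le₀ (by exact_mod_cast le_trans (le_of_lt hjℓ) hℓ) (Nat.cast_nonneg n)
    gcongr
  have hk1 : 0 ≤ sisF n lamL a gam k m1 := sisF_nonneg n lamL a gam hL ha hg (le_trans hkl hℓ) h1
  have hk2 : 0 ≤ sisF n lamL a gam k m2 := sisF_nonneg n lamL a gam hL ha hg (le_trans hkl hℓ) h2
  rw [split m1, split m2]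
  have hmul := mul_le_mul_of_nonneg_left hG (mul_nonneg hk1 hk2)
  nlinarith [hmul]

lemma chebyshev_like (N : ℕ) (F1 F2 : ℕ → ℝ)
    (h : ∀ k ℓ, k ∈ Finset.range N → ℓ ∈ Finset.range N → k ≤ ℓ →
      F1 ℓ * F2 k ≤ F2 ℓ * F1 k) :
    (∑ ℓ ∈ Finset.range N, (ℓ : ℝ) * F1 ℓ) * (∑ ℓ ∈ Finset.range N, F2 ℓ) ≤
      (∑ ℓ ∈ Finset.range N, (ℓ : ℝ) * F2 ℓ) * (∑ ℓ ∈ Finset.range N, F1 ℓ) := by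
  have key : 0 ≤ ∑ ℓ ∈ Finset.range N, ∑ k ∈ Finset.range N,
      ((ℓ : ℝ) - k) * (F2 ℓ * F1 k - F1 ℓ * F2 k) := by
    apply Finset.sum_nonneg
    intro ℓ hℓ
    apply Finset.sum_nonneg
    intro k hk
    rcases le_total k ℓ with hkl | hkl
    · exact mul_nonneg (sub_nonneg.mpr (by exact_mod_cast hkl))
        (sub_nonneg.mpr (h k ℓ hk hℓ hkl))
    · have hx : (ℓ : ℝ) - k ≤ 0 := sub_nonpos.mpr (by exact_mod_cast hkl)
      have hy : F2 ℓ * F1 k - F1 ℓ * F2 k ≤ 0 :=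
        sub_nonpos.mpr (by nlinarith [h ℓ k hℓ hk hkl])
      nlinarith
  have swap : ∀ G H : ℕ → ℝ,
      (∑ ℓ ∈ Finset.range N, ∑ k ∈ Finset.range N, (k : ℝ) * (G ℓ * H k)) =
        ∑ ℓ ∈ Finset.range N, ∑ k ∈ Finset.range N, (ℓ : ℝ) * (H ℓ * G k) := by
    intro G H
    rw [Finset.sum_comm]
    exact Finset.sum_congr rfl fun ℓ _ => Finset.sum_congr rfl fun k _ => by ring
  have prod_eq : ∀ G H : ℕ → ℝ,
      (∑ ℓ ∈ Finset.range N, ∑ k ∈ Finset.range N, (ℓ : ℝ) * (G ℓ * H k)) =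
        (∑ ℓ ∈ Finset.range N, (ℓ : ℝ) * G ℓ) * (∑ ℓ ∈ Finset.range N, H ℓ) := by
    intro G H
    rw [Finset.sum_mul_sum]
    exact Finset.sum_congr rfl fun ℓ _ => Finset.sum_congr rfl fun k _ => by ring
  have expand : (∑ ℓ ∈ Finset.range N, ∑ k ∈ Finset.range N,
      ((ℓ : ℝ) - k) * (F2 ℓ * F1 k - F1 ℓ * F2 k)) =
      (∑ ℓ ∈ Finset.range N, ∑ k ∈ Finset.range N, (ℓ : ℝ) * (F2 ℓ * F1 k))
      - (∑ ℓ ∈ Finset.range N, ∑ k ∈ Finset.range N, (ℓ : ℝ) * (F1 ℓ * F2 k))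
      - (∑ ℓ ∈ Finset.range N, ∑ k ∈ Finset.range N, (k : ℝ) * (F2 ℓ * F1 k))
      + (∑ ℓ ∈ Finset.range N, ∑ k ∈ Finset.range N, (k : ℝ) * (F1 ℓ * F2 k)) := by
    simp only [← Finset.sum_add_distrib, ← Finset.sum_sub_distrib]
    exact Finset.sum_congr rfl fun ℓ _ => Finset.sum_congr rfl fun k _ => by ring
  rw [expand, swap F2 F1, swap F1 F2, prod_eq F2 F1, prod_eq F1 F2] at key
  linarith

theorem stmt_17 (n : ℕ) (hn : 1 ≤ n) (lamL lamG gam pibar : ℝ)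
    (hL : 0 < lamL) (hG : 0 < lamG) (hg : 0 < gam) (hpi : 0 < pibar)
    (μ : ℝ → ℕ → ℝ)
    (hrec : ∀ m ∈ Icc (0:ℝ) pibar, ∀ ℓ : ℕ, ℓ ≤ n - 1 →
      gam * (ℓ + 1 : ℝ) * μ m (ℓ + 1) =
        (1 - (ℓ : ℝ) / n) * (lamL * ℓ + lamG * ((n : ℝ) / pibar) * m) * μ m ℓ)
    (hprob : ∀ m ∈ Icc (0:ℝ) pibar, (∀ ℓ ≤ n, 0 ≤ μ m ℓ) ∧
      ∑ ℓ ∈ Finset.range (n + 1), μ m ℓ = 1)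
    (M : ℝ → ℝ)
    (hM : ∀ m, M m = ∑ ℓ ∈ Finset.range (n + 1), (ℓ : ℝ) * μ m ℓ) :
    ContinuousOn M (Icc 0 pibar) ∧ MonotoneOn M (Icc 0 pibar) ∧
      M 0 = 0 ∧ ∀ m ∈ Icc (0:ℝ) pibar, M m ≤ n := by
  have hn0 : (0:ℝ) < n := by exact_mod_cast Nat.lt_of_lt_of_le Nat.zero_lt_one hn
  set a : ℝ := lamG * ((n : ℝ) / pibar) with hadef
  have ha : 0 < a := by
    rw [hadef]; positivity
  have hL0 : 0 ≤ lamL := le_of_lt hL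
  have ha0 : 0 ≤ a := le_of_lt ha
  -- μ m ℓ = μ m 0 * sisF for ℓ ≤ n
  have hμf : ∀ m ∈ Icc (0:ℝ) pibar, ∀ ℓ : ℕ, ℓ ≤ n →
      μ m ℓ = μ m 0 * sisF n lamL a gam ℓ m := by
    intro m hm ℓ
    induction ℓ with
    | zero => intro _; simp [sisF]
    | succ p ih =>
      intro hp
      have hpn : p ≤ n - 1 := by omega
      have hrec' := hrec m hm p hpn
      have hpgoal : μ m (p + 1) =
          ((1 - (p : ℝ) / n) * (lamL * p + a * m) * μ m p) / (gam * (p + 1)) := by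
        rw [eq_div_iff (by positivity)]
        linear_combination hrec'
      rw [hpgoal, ih (by omega), sisF_succ]
      ring
  -- normalization : μ m 0 * S m = 1
  have hS1 : ∀ m ∈ Icc (0:ℝ) pibar,
      μ m 0 * (∑ ℓ ∈ Finset.range (n + 1), sisF n lamL a gam ℓ m) = 1 := by
    intro m hm
    rw [← (hprob m hm).2, Finset.mul_sum]
    exact Finset.sum_congr rfl fun ℓ hℓ =>
      (hμf m hm ℓ (Nat.lt_succ_iff.mp (Finset.mem_range.mp hℓ))).symm
  have hSpos : ∀ m ∈ Icc (0:ℝ) pibar,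
      0 < ∑ ℓ ∈ Finset.range (n + 1), sisF n lamL a gam ℓ m := by
    intro m hm
    apply Finset.sum_pos'
    · intro ℓ hℓ
      exact sisF_nonneg n lamL a gam hL0 ha0 hg (by simpa using Nat.lt_succ_iff.mp (Finset.mem_range.mp hℓ)) hm.1
    · exact ⟨0, Finset.mem_range.mpr (Nat.succ_pos n), by simp [sisF]⟩
  -- M m = T m / S m
  have hMeq : ∀ m ∈ Icc (0:ℝ) pibar,
      M m = (∑ ℓ ∈ Finset.range (n + 1), (ℓ : ℝ) * sisF n lamL a gam ℓ m) /
        (∑ ℓ ∈ Finset.range (n + 1), sisF n lamL a gam ℓ m) := by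
    intro m hm
    have hT : M m = μ m 0 * ∑ ℓ ∈ Finset.range (n + 1), (ℓ : ℝ) * sisF n lamL a gam ℓ m := by
      rw [hM, Finset.mul_sum]
      refine Finset.sum_congr rfl fun ℓ hℓ => ?_
      rw [hμf m hm ℓ (Nat.lt_succ_iff.mp (Finset.mem_range.mp hℓ))]
      ring
    have hμ0 : μ m 0 = 1 / ∑ ℓ ∈ Finset.range (n + 1), sisF n lamL a gam ℓ m :=
      eq_one_div_of_mul_eq_one_left (by linear_combination hS1 m hm)
    rw [hT, hμ0]
    ring
  have hFcont : ∀ ℓ : ℕ, Continuous (fun m => sisF n lamL a gam ℓ m) := by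
    intro ℓ
    unfold sisF
    apply continuous_finset_prod
    intro j _
    exact (continuous_const.mul (continuous_const.add (continuous_const.mul continuous_id))).div_const _
  refine ⟨?_, ?_, ?_, ?_⟩
  · -- continuity
    apply ContinuousOn.congr (f := fun m =>
      (∑ ℓ ∈ Finset.range (n + 1), (ℓ : ℝ) * sisF n lamL a gam ℓ m) /
        (∑ ℓ ∈ Finset.range (n + 1), sisF n lamL a gam ℓ m))
    · apply ContinuousOn.div
      · exact (continuous_finset_sum _ fun ℓ _ => continuous_const.mul (hFcont ℓ)).continuousOn
      · exact (continuous_finset_sum _ fun ℓ _ => hFcont ℓ).continuousOn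
      · intro m hm; exact ne_of_gt (hSpos m hm)
    · intro m hm; exact hMeq m hm
  · -- monotone
    intro m1 hm1 m2 hm2 h12
    rw [hMeq m1 hm1, hMeq m2 hm2, div_le_div_iff₀ (hSpos m1 hm1) (hSpos m2 hm2)]
    apply chebyshev_like
    intro k ℓ hk hℓ hkl
    exact sisF_supermod n lamL a gam hL0 ha0 hg hkl
      (Nat.lt_succ_iff.mp (Finset.mem_range.mp hℓ)) hm1.1 h12
  · -- M 0 = 0
    have h0mem : (0:ℝ) ∈ Icc (0:ℝ) pibar := ⟨le_refl _, le_of_lt hpi⟩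
    rw [hMeq 0 h0mem]
    have hT0 : (∑ ℓ ∈ Finset.range (n + 1), (ℓ : ℝ) * sisF n lamL a gam ℓ 0) = 0 := by
      apply Finset.sum_eq_zero
      intro ℓ _
      rcases Nat.eq_zero_or_pos ℓ with h | h
      · simp [h]
      · have : sisF n lamL a gam ℓ 0 = 0 := by
          apply Finset.prod_eq_zero (Finset.mem_range.mpr h)
          simp
        simp [this]
    rw [hT0, zero_div]
  · -- M m ≤ n
    intro m hm
    rw [hM]
    have h1 := (hprob m hm).1
    calc (∑ ℓ ∈ Finset.range (n + 1), (ℓ : ℝ) * μ m ℓ)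
        ≤ ∑ ℓ ∈ Finset.range (n + 1), (n : ℝ) * μ m ℓ := by
          apply Finset.sum_le_sum
          intro ℓ hℓ
          have hℓn : ℓ ≤ n := Nat.lt_succ_iff.mp (Finset.mem_range.mp hℓ)
          exact mul_le_mul_of_nonneg_right (by exact_mod_cast hℓn) (h1 ℓ hℓn)
      _ = (n : ℝ) := by rw [← Finset.mul_sum, (hprob m hm).2, mul_one]
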